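/- Soundness of shielding via abstraction (main theorem): let M be an FSRS, M' an FSRS that abstracts M, A a safety automaton realizing specification φ, and σ a controller strategy such that at every point σ only plays actions from the safe-region of the product game M' || A (i.e., actions a1 such that all a2-successors from the current product state remain in the winning region). Then for every environment strategy τ in M, every finite observable trace of M under σ and τ belongs to φ. -/

import Mathlib

/-- Partial run of a Mealy machine from a state over an input word. -/
def mrun {S I : Type} (E : S → I → Option S) : S → List I → Option S
  | s, [] => some s
  | s, a :: w => (E s a).bind fun s' => mrun E s' w

/-- Output of the last transition of a Mealy machine over a (nonempty) input word. -/
def mout {S I O : Type} (E : S → I → Option S) (Λ : S → I → Option O) : S → List I → Option O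
  | _, [] => none
  | s, [a] => Λ s a
  | s, a :: b :: w => (E s a).bind fun s' => mout E Λ s' (b :: w)

/-- A Mealy machine with partial transition and output functions. -/
structure Mealy (I O : Type) where
  S : Type
  init : S
  E : S → I → Option S
  lam : S → I → Option O

/-- State reached from the initial state over an input word. -/
def Mealy.run {I O : Type} (M : Mealy I O) (w : List I) : Option M.S := mrun M.E M.init w

/-- Output of the last transition over an input word. -/
def Mealy.output {I O : Type} (M : Mealy I O) (w : List I) : Option O := mout M.E M.lam M.init w

/-- M' abstracts M: every input word defined in M is defined in M', with equal outputs. -/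
def Abstracts {I O : Type} (M' M : Mealy I O) : Prop :=
  ∀ w : List I, (M.run w).isSome → (M'.run w).isSome ∧ M'.output w = M.output w

/-- Observable input/output trace of a Mealy machine along an input word. -/
def mtrace {S I O : Type} (E : S → I → Option S) (Λ : S → I → Option O) :
    S → List I → Option (List (I × O))
  | _, [] => some []
  | s, a :: w =>
      (E s a).bind fun s' => (Λ s a).bind fun b => (mtrace E Λ s' w).map fun t => (a, b) :: t

lemma mrun_append {S I : Type} (E : S → I → Option S) (a : I) :
    ∀ (w : List I) (s : S), mrun E s (w ++ [a]) = (mrun E s w).bind fun s1 => E s1 a := by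
  intro w
  induction w with
  | nil => intro s; simp [mrun]
  | cons x w ih => intro s; cases hx : E s x <;> simp [mrun, hx, ih]

lemma mout_append {S I O : Type} (E : S → I → Option S) (Λ : S → I → Option O) (a : I) :
    ∀ (w : List I) (s : S), mout E Λ s (w ++ [a]) = (mrun E s w).bind fun s1 => Λ s1 a := by
  intro w
  induction w with
  | nil => intro s; simp [mout, mrun]
  | cons x w ih =>
    intro s
    cases w with
    | nil => cases hx : E s x <;> simp [mout, mrun, hx]
    | cons y w' =>
      cases hx : E s x <;> simp [mout, mrun, hx]
      exact ih _

lemma mtrace_append {S I O : Type} (E : S → I → Option S) (Λ : S → I → Option O) (a : I) :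
    ∀ (w : List I) (s : S), mtrace E Λ s (w ++ [a]) =
      (mrun E s w).bind fun s1 => (mtrace E Λ s w).bind fun t =>
        (E s1 a).bind fun _ => (Λ s1 a).map fun b => t ++ [(a, b)] := by
  intro w
  induction w with
  | nil => intro s; cases h1 : E s a <;> cases h2 : Λ s a <;> simp [mtrace, mrun, h1, h2]
  | cons x w ih =>
    intro s
    cases h1 : E s x <;> cases h2 : Λ s x <;> simp [mtrace, mrun, h1, h2, ih]
    cases mrun E _ w <;> simp
    cases mtrace E Λ _ w <;> simp
    cases E _ a <;> simp
    cases Λ _ a <;> simp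

lemma mrun_proj {S' Q A O : Type} (E' : S' → A → Option S') (Λ' : S' → A → Option O)
    (N : Q → A × O → Q) :
    ∀ (w : List A) (l : S') (q : Q) (g : S' × Q),
      mrun (fun (g : S' × Q) (a : A) =>
        (E' g.1 a).bind fun l' => (Λ' g.1 a).map fun b => (l', N g.2 (a, b))) (l, q) w = some g →
      mrun E' l w = some g.1 := by
  intro w
  induction w with
  | nil => intro l q g h; simp [mrun] at h ⊢; rw [← h]
  | cons x w ih =>
    intro l q g h
    simp only [mrun, Option.bind_eq_some_iff] at h ⊢
    obtain ⟨g1, hg1, hrest⟩ := h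
    simp only [Option.bind_eq_some_iff, Option.map_eq_some_iff] at hg1
    obtain ⟨l', hl', b, hb, hg1eq⟩ := hg1
    exact ⟨l', hl', ih l' (N q (x, b)) g (by rw [← hg1eq] at hrest; exact hrest)⟩

/-- Soundness of shielding via abstraction. Let `M'` abstract `M`, let the
safety automaton `(Q, q0, F, N)` realize the specification, and let `σ` be a controller
strategy that, after any defined history, only plays actions all of whose environment
successors in the product game `M' || A` stay in the winning region `W`. If the initial
product state is in `W`, then every observable trace of `M` consistent with `σ` ends in a
safe automaton state, i.e. belongs to the specification. -/
theorem shielding_sound {S S' Q A1 A2 O : Type}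
    (E : S → A1 × A2 → Option S) (Λ : S → A1 × A2 → Option O) (init : S)
    (E' : S' → A1 × A2 → Option S') (Λ' : S' → A1 × A2 → Option O) (init' : S')
    (N : Q → (A1 × A2) × O → Q) (q0 : Q) (F : Set Q)
    (habs : ∀ w : List (A1 × A2), (mrun E init w).isSome →
      (mrun E' init' w).isSome ∧ mout E' Λ' init' w = mout E Λ init w)
    (σ : List (A1 × A2) → A1) :
    let EG : S' × Q → A1 × A2 → Option (S' × Q) := fun g a =>
      (E' g.1 a).bind fun l' => (Λ' g.1 a).map fun b => (l', N g.2 (a, b))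
    let W : Set (S' × Q) :=
      ⋃₀ {T | ∀ g ∈ T, g.2 ∈ F ∧
        ∃ a1 : A1, ∀ (a2 : A2) (g' : S' × Q), EG g (a1, a2) = some g' → g' ∈ T}
    (init', q0) ∈ W →
    (∀ w : List (A1 × A2), (mrun E init w).isSome →
      ∀ g : S' × Q, mrun EG (init', q0) w = some g →
        ∀ (a2 : A2) (g' : S' × Q), EG g (σ w, a2) = some g' → g' ∈ W) →
    ∀ w : List (A1 × A2),
      (∀ (k : ℕ) (h : k < w.length), (w.get ⟨k, h⟩).1 = σ (w.take k)) →
      ∀ t : List ((A1 × A2) × O), mtrace E Λ init w = some t → t.foldl N q0 ∈ F := by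
  intro EG W hinit hσ
  have hWF : ∀ g ∈ W, g.2 ∈ F := by
    intro g hg
    obtain ⟨T, hT, hgT⟩ := hg
    exact (hT g hgT).1
  suffices H : ∀ w : List (A1 × A2),
      (∀ (k : ℕ) (h : k < w.length), (w.get ⟨k, h⟩).1 = σ (w.take k)) →
      ∀ t : List ((A1 × A2) × O), mtrace E Λ init w = some t →
        ∃ g, mrun EG (init', q0) w = some g ∧ g ∈ W ∧ g.2 = t.foldl N q0 by
    intro w hc t ht
    obtain ⟨g, _, hgW, hsnd⟩ := H w hc t ht
    rw [← hsnd]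
    exact hWF g hgW
  intro w
  induction w using List.reverseRecOn with
  | nil =>
    intro _ t ht
    simp [mtrace] at ht
    exact ⟨(init', q0), rfl, hinit, by simp [ht]⟩
  | append_singleton w a ih =>
    intro hc u hu
    rw [mtrace_append] at hu
    simp only [Option.bind_eq_some_iff, Option.map_eq_some_iff] at hu
    obtain ⟨s1, hs1, t, ht, s2, hs2, b, hb, hu'⟩ := hu
    have hcw : ∀ (k : ℕ) (h : k < w.length), (w.get ⟨k, h⟩).1 = σ (w.take k) := by
      intro k h
      have h' : k < (w ++ [a]).length := by simp; omega
      have := hc k h'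
      simp only [List.get_eq_getElem] at this ⊢
      rwa [List.getElem_append_left, List.take_append_of_le_length (le_of_lt h)] at this
    have ha1 : a.1 = σ w := by
      have h' : w.length < (w ++ [a]).length := by simp
      have := hc w.length h'
      simp only [List.get_eq_getElem] at this
      rwa [List.getElem_concat_length (l := w) (a := a) rfl, List.take_left] at this
    obtain ⟨g, hgrun, hgW, hgsnd⟩ := ih hcw t ht
    have hdef : (mrun E init (w ++ [a])).isSome := by
      rw [mrun_append]; simp [hs1, hs2]
    obtain ⟨hdef', hout⟩ := habs (w ++ [a]) hdef
    have hrun' : mrun E' init' w = some g.1 := mrun_proj E' Λ' N w init' q0 g hgrun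
    have hΛ' : Λ' g.1 a = some b := by
      have h2 : mout E' Λ' init' (w ++ [a]) = some b := by
        rw [hout, mout_append, hs1]; simpa using hb
      rw [mout_append, hrun'] at h2
      simpa using h2
    obtain ⟨l2, hl2⟩ : ∃ l2, E' g.1 a = some l2 := by
      rw [mrun_append, hrun'] at hdef'
      simpa [Option.isSome_iff_exists] using hdef'
    have hEG : EG g a = some (l2, N g.2 (a, b)) := by
      show ((E' g.1 a).bind fun l' => (Λ' g.1 a).map fun b => (l', N g.2 (a, b)))
        = some (l2, N g.2 (a, b))
      rw [hl2, hΛ']; rfl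
    have hmem : (l2, N g.2 (a, b)) ∈ W := by
      have hae : (σ w, a.2) = a := by rw [← ha1]
      exact hσ w (by simp [hs1]) g hgrun a.2 (l2, N g.2 (a, b)) (by rw [hae]; exact hEG)
    refine ⟨(l2, N g.2 (a, b)), ?_, hmem, ?_⟩
    · rw [mrun_append, hgrun]; simpa using hEG
    · simp [← hu', hgsnd]
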